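/- Let x, y be nonzero real polynomials with deg x = deg y. Assume that either x(z) > 0 for every real root z of y, or x(z) < 0 for every real root z of y. Then there exists a real polynomial η with no real roots (η(t) ≠ 0 for all t ∈ ℝ) such that the polynomial δ = x·η + y^2 satisfies δ(t) > 0 for all t ∈ ℝ, and deg y − 1 ≤ deg η ≤ deg y, with deg δ = 2·deg y. -/
import Mathlib

open Polynomial Filter Set

private lemma aux_pos (x y : Polynomial ℝ) (hx : x ≠ 0) (hy : y ≠ 0)
    (hdeg : x.natDegree = y.natDegree)
    (hsign : ∀ z : ℝ, y.eval z = 0 → 0 < x.eval z) :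
    ∃ η : Polynomial ℝ, (∀ t : ℝ, 0 < η.eval t) ∧
      (∀ t : ℝ, 0 < (x * η + y ^ 2).eval t) ∧
      y.natDegree - 1 ≤ η.natDegree ∧ η.natDegree ≤ y.natDegree ∧
      (x * η + y ^ 2).natDegree = 2 * y.natDegree := by
  set n := y.natDegree with hn
  set q : Polynomial ℝ := (X ^ 2 + C 1) ^ (n / 2) with hqdef
  have hqmonic : q.Monic := (monic_X_pow_add_C (1 : ℝ) (by norm_num)).pow _
  have hq0 : q ≠ 0 := hqmonic.ne_zero
  have hqdeg : q.natDegree = 2 * (n / 2) := by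
    rw [hqdef, natDegree_pow, natDegree_X_pow_add_C]; ring
  have hqpos : ∀ t : ℝ, 0 < q.eval t := by
    intro t
    rw [hqdef]
    simp only [eval_pow, eval_add, eval_X, eval_C]
    positivity
  -- basic degree facts
  have hy2deg : (y ^ 2).natDegree = 2 * n := by rw [natDegree_pow]
  set L : ℝ := y.leadingCoeff ^ 2 with hLdef
  have hL : 0 < L := by
    have := leadingCoeff_ne_zero.mpr hy
    positivity
  have hy2coeff : (y ^ 2).coeff (2 * n) = L := by
    have := coeff_natDegree (p := y ^ 2)
    rw [hy2deg] at this
    rw [this, leadingCoeff_pow]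
  have hxqdeg : (x * q).natDegree = n + 2 * (n / 2) := by
    rw [natDegree_mul hx hq0, hdeg, hqdeg]
  have hxqle : (x * q).natDegree ≤ 2 * n := by
    rw [hxqdeg]; omega
  set a : ℝ := (x * q).coeff (2 * n) with hadef
  set C₀ : ℝ := (|a| + 1) / L with hC₀def
  have hC₀pos : 0 < C₀ := by
    apply div_pos _ hL; positivity
  set w₀ : Polynomial ℝ := x * q + C C₀ * y ^ 2 with hw₀def
  have hw₀coeff : w₀.coeff (2 * n) = a + (|a| + 1) := by
    rw [hw₀def, coeff_add, coeff_C_mul, hy2coeff, hC₀def, div_mul_cancel₀ _ hL.ne', hadef]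
  have hw₀coeffpos : 0 < w₀.coeff (2 * n) := by
    rw [hw₀coeff]
    have : -|a| ≤ a := neg_abs_le a
    linarith
  have hw₀le : w₀.natDegree ≤ 2 * n :=
    natDegree_add_le_of_degree_le hxqle ((natDegree_C_mul_le _ _).trans hy2deg.le)
  have hw₀deg : w₀.natDegree = 2 * n :=
    le_antisymm hw₀le (le_natDegree_of_ne_zero hw₀coeffpos.ne')
  have hw₀lc : 0 < w₀.leadingCoeff := by
    rwa [leadingCoeff, hw₀deg]
  have hw₀ne : w₀ ≠ 0 := leadingCoeff_ne_zero.mp hw₀lc.ne'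
  -- eval of w₀
  have hw₀eval : ∀ t : ℝ, w₀.eval t = (x * q).eval t + C₀ * (y ^ 2).eval t := by
    intro t; simp [hw₀def]
  have hy2nonneg : ∀ t : ℝ, 0 ≤ (y ^ 2).eval t := by
    intro t; rw [eval_pow]; positivity
  -- key: where w₀ ≤ 0, y² > 0
  have hkey : ∀ t : ℝ, w₀.eval t ≤ 0 → 0 < (y ^ 2).eval t := by
    intro t ht
    rcases lt_or_eq_of_le (hy2nonneg t) with h | h
    · exact h
    · exfalso
      have hyt : y.eval t = 0 := by
        have := h.symm
        rw [eval_pow] at this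
        exact pow_eq_zero_iff (n := 2) (by norm_num) |>.mp this
      have hxt := hsign t hyt
      have : 0 < w₀.eval t := by
        rw [hw₀eval, ← h, mul_zero, add_zero, eval_mul]
        exact mul_pos hxt (hqpos t)
      linarith
  -- find R such that w₀ > 0 outside [-R, R]
  obtain ⟨R, hR0, hR⟩ : ∃ R : ℝ, 0 ≤ R ∧ ∀ t : ℝ, t ∉ Icc (-R) R → 0 < w₀.eval t := by
    by_cases hn0 : n = 0
    · refine ⟨0, le_refl _, fun t _ => ?_⟩
      have hdeg0 : w₀.natDegree = 0 := by rw [hw₀deg, hn0]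
      have : w₀ = C (w₀.coeff 0) := eq_C_of_natDegree_eq_zero hdeg0
      rw [this, eval_C]
      have := hw₀coeffpos
      rwa [hn0, mul_zero] at this
    · have hdpos : 0 < w₀.degree := by
        rw [← natDegree_pos_iff_degree_pos, hw₀deg]; omega
      have htop : Tendsto (fun s => w₀.eval s) atTop atTop :=
        w₀.tendsto_atTop_of_leadingCoeff_nonneg hdpos hw₀lc.le
      have hbot : Tendsto (fun s => w₀.eval s) atBot atTop := by
        set w₁ : Polynomial ℝ := w₀.comp (-X) with hw₁def
        have hnd : (-X : Polynomial ℝ).natDegree = 1 := by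
          rw [natDegree_neg, natDegree_X]
        have hw₁deg : w₁.natDegree = 2 * n := by
          rw [hw₁def, natDegree_comp, hnd, hw₀deg, mul_one]
        have hw₁dpos : 0 < w₁.degree := by
          rw [← natDegree_pos_iff_degree_pos, hw₁deg]; omega
        have hw₁lc : 0 ≤ w₁.leadingCoeff := by
          rw [hw₁def, leadingCoeff_comp (by rw [hnd]; norm_num)]
          have : (-X : Polynomial ℝ).leadingCoeff = -1 := by
            rw [leadingCoeff_neg, leadingCoeff_X]
          rw [this, hw₀deg]
          have : (-1 : ℝ) ^ (2 * n) = 1 := by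
            rw [pow_mul]; norm_num
          rw [this, mul_one]
          exact hw₀lc.le
        have h1 : Tendsto (fun s => w₁.eval s) atTop atTop :=
          w₁.tendsto_atTop_of_leadingCoeff_nonneg hw₁dpos hw₁lc
        have h2 : ∀ s : ℝ, w₁.eval s = w₀.eval (-s) := by
          intro s; rw [hw₁def, eval_comp, eval_neg, eval_X]
        have h3 : Tendsto (fun s : ℝ => w₀.eval (-s)) atTop atTop := by
          simpa [h2] using h1
        have h4 := h3.comp (tendsto_neg_atBot_atTop : Filter.Tendsto (Neg.neg : ℝ → ℝ) atBot atTop)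
        have h5 : ((fun s : ℝ => w₀.eval (-s)) ∘ Neg.neg) = fun s : ℝ => w₀.eval s := by
          funext s; simp [Function.comp]
        rwa [h5] at h4
      obtain ⟨R₁, hR₁⟩ := (htop.eventually (eventually_gt_atTop 0)).exists_forall_of_atTop
      obtain ⟨R₂, hR₂⟩ : ∃ R₂ : ℝ, ∀ s ≤ R₂, 0 < w₀.eval s := by
        have := hbot.eventually (eventually_gt_atTop 0)
        rw [eventually_atBot] at this
        exact this
      refine ⟨max 0 (max R₁ (-R₂)), le_max_left _ _, fun t ht => ?_⟩
      rw [mem_Icc, not_and_or, not_le, not_le] at ht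
      rcases ht with ht | ht
      · apply hR₂
        have : -R₂ ≤ max 0 (max R₁ (-R₂)) := le_max_of_le_right (le_max_right _ _)
        linarith
      · apply hR₁
        have : R₁ ≤ max 0 (max R₁ (-R₂)) := le_max_of_le_right (le_max_left _ _)
        linarith
  -- compact part
  have hScomp : IsCompact (Icc (-R) R) := isCompact_Icc
  have hSne : (Icc (-R) R).Nonempty := ⟨0, by constructor <;> linarith⟩
  have hcont_w : Continuous fun t : ℝ => w₀.eval t := w₀.continuous
  have hcont_g : Continuous fun t : ℝ => (y ^ 2).eval t := (y ^ 2).continuous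
  have hcont_h : Continuous fun t : ℝ => (y ^ 2).eval t + max (w₀.eval t) 0 :=
    hcont_g.add (hcont_w.max continuous_const)
  obtain ⟨t₀, ht₀S, ht₀min⟩ := hScomp.exists_isMinOn hSne hcont_h.continuousOn
  set m : ℝ := (y ^ 2).eval t₀ + max (w₀.eval t₀) 0 with hmdef
  have hm : 0 < m := by
    rcases le_or_gt (w₀.eval t₀) 0 with h | h
    · have := hkey t₀ h
      have : 0 < (y ^ 2).eval t₀ := this
      have h2 : (0 : ℝ) ≤ max (w₀.eval t₀) 0 := le_max_right _ _
      linarith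
    · have h2 : w₀.eval t₀ ≤ max (w₀.eval t₀) 0 := le_max_left _ _
      have := hy2nonneg t₀
      linarith
  obtain ⟨b, hbS, hbmin⟩ := hScomp.exists_isMinOn hSne hcont_w.continuousOn
  set B : ℝ := w₀.eval b with hBdef
  set C₁ : ℝ := (|B| + 1) / m with hC₁def
  have hC₁nonneg : 0 ≤ C₁ := by
    apply div_nonneg _ hm.le; positivity
  set Ct : ℝ := C₀ + C₁ with hCtdef
  have hCt : 0 < Ct := by positivity
  -- pointwise positivity of x*q + Ct * y²
  have hptwise : ∀ t : ℝ, 0 < (x * q).eval t + Ct * (y ^ 2).eval t := by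
    intro t
    have hsplit : (x * q).eval t + Ct * (y ^ 2).eval t
        = w₀.eval t + C₁ * (y ^ 2).eval t := by
      rw [hw₀eval]; ring
    rw [hsplit]
    by_cases htS : t ∈ Icc (-R) R
    · rcases le_or_gt (w₀.eval t) 0 with hft | hft
      · have hht : m ≤ (y ^ 2).eval t + max (w₀.eval t) 0 := ht₀min htS
        have hmax : max (w₀.eval t) 0 = 0 := max_eq_right hft
        rw [hmax, add_zero] at hht
        have hC₁g : |B| + 1 ≤ C₁ * (y ^ 2).eval t := by
          rw [hC₁def, div_mul_eq_mul_div, le_div_iff₀ hm]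
          have h1 : 0 ≤ |B| + 1 := by positivity
          calc (|B| + 1) * m ≤ (|B| + 1) * (y ^ 2).eval t := by
                apply mul_le_mul_of_nonneg_left hht h1
            _ = (|B| + 1) * (y ^ 2).eval t * 1 := by ring
            _ ≤ _ := by rw [mul_one]
        have hfB : B ≤ w₀.eval t := hbmin htS
        have : -|B| ≤ B := neg_abs_le B
        linarith
      · have := mul_nonneg hC₁nonneg (hy2nonneg t)
        linarith
    · have := hR t htS
      have h2 := mul_nonneg hC₁nonneg (hy2nonneg t)
      linarith
  -- final η
  refine ⟨C Ct⁻¹ * q, ?_, ?_, ?_, ?_, ?_⟩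
  · intro t
    rw [eval_mul, eval_C]
    exact mul_pos (inv_pos.mpr hCt) (hqpos t)
  · intro t
    have hδ : x * (C Ct⁻¹ * q) + y ^ 2 = C Ct⁻¹ * (x * q + C Ct * y ^ 2) := by
      have h1 : C Ct⁻¹ * C Ct = (1 : Polynomial ℝ) := by
        rw [← C_mul, inv_mul_cancel₀ hCt.ne', C_1]
      calc x * (C Ct⁻¹ * q) + y ^ 2 = C Ct⁻¹ * (x * q) + 1 * y ^ 2 := by ring
        _ = C Ct⁻¹ * (x * q) + (C Ct⁻¹ * C Ct) * y ^ 2 := by rw [h1]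
        _ = C Ct⁻¹ * (x * q + C Ct * y ^ 2) := by ring
    rw [hδ, eval_mul, eval_C]
    have heq : (x * q + C Ct * y ^ 2).eval t = (x * q).eval t + Ct * (y ^ 2).eval t := by
      simp [eval_add, eval_mul, eval_C]
    rw [heq]
    exact mul_pos (inv_pos.mpr hCt) (hptwise t)
  · rw [natDegree_C_mul (inv_ne_zero hCt.ne'), hqdeg]; omega
  · rw [natDegree_C_mul (inv_ne_zero hCt.ne'), hqdeg]; omega
  · have hδ : x * (C Ct⁻¹ * q) + y ^ 2 = C Ct⁻¹ * (x * q + C Ct * y ^ 2) := by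
      have h1 : C Ct⁻¹ * C Ct = (1 : Polynomial ℝ) := by
        rw [← C_mul, inv_mul_cancel₀ hCt.ne', C_1]
      calc x * (C Ct⁻¹ * q) + y ^ 2 = C Ct⁻¹ * (x * q) + 1 * y ^ 2 := by ring
        _ = C Ct⁻¹ * (x * q) + (C Ct⁻¹ * C Ct) * y ^ 2 := by rw [h1]
        _ = C Ct⁻¹ * (x * q + C Ct * y ^ 2) := by ring
    rw [hδ, natDegree_C_mul (inv_ne_zero hCt.ne')]
    set W : Polynomial ℝ := x * q + C Ct * y ^ 2 with hWdef
    have hWcoeff : 0 < W.coeff (2 * n) := by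
      rw [hWdef, coeff_add, coeff_C_mul, hy2coeff, ← hadef, hCtdef]
      have h1 : -|a| ≤ a := neg_abs_le a
      have h2 : 0 ≤ C₁ * L := mul_nonneg hC₁nonneg hL.le
      have h3 : (|a| + 1) / L * L = |a| + 1 := div_mul_cancel₀ _ hL.ne'
      have : a + (C₀ + C₁) * L = a + (|a| + 1) + C₁ * L := by
        rw [add_mul, hC₀def, h3]; ring
      rw [this]
      linarith
    have hWle : W.natDegree ≤ 2 * n :=
      natDegree_add_le_of_degree_le hxqle ((natDegree_C_mul_le _ _).trans hy2deg.le)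
    exact le_antisymm hWle (le_natDegree_of_ne_zero hWcoeff.ne')

/-- If `x, y` are nonzero real polynomials of equal degree and `x` has
constant sign on the real roots of `y`, then there is a real polynomial `η` without real
roots such that `δ = x·η + y²` is everywhere positive, with
`deg y − 1 ≤ deg η ≤ deg y` and `deg δ = 2·deg y`. -/
theorem exists_eta_mul_add_sq_pos (x y : Polynomial ℝ) (hx : x ≠ 0) (hy : y ≠ 0)
    (hdeg : x.natDegree = y.natDegree)
    (hsign : (∀ z : ℝ, y.eval z = 0 → 0 < x.eval z) ∨
             (∀ z : ℝ, y.eval z = 0 → x.eval z < 0)) :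
    ∃ η : Polynomial ℝ, (∀ t : ℝ, η.eval t ≠ 0) ∧
      (∀ t : ℝ, 0 < (x * η + y ^ 2).eval t) ∧
      y.natDegree - 1 ≤ η.natDegree ∧ η.natDegree ≤ y.natDegree ∧
      (x * η + y ^ 2).natDegree = 2 * y.natDegree := by
  rcases hsign with h | h
  · obtain ⟨η, h1, h2, h3, h4, h5⟩ := aux_pos x y hx hy hdeg h
    exact ⟨η, fun t => (h1 t).ne', h2, h3, h4, h5⟩
  · obtain ⟨η, h1, h2, h3, h4, h5⟩ := aux_pos (-x) y (neg_ne_zero.mpr hx) hy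
      (by rwa [natDegree_neg])
      (by intro z hz; have := h z hz; rw [eval_neg]; linarith)
    have hrw : x * -η + y ^ 2 = -x * η + y ^ 2 := by ring
    refine ⟨-η, fun t => ?_, ?_, ?_, ?_, ?_⟩
    · rw [eval_neg]
      have := h1 t
      intro hcon
      rw [neg_eq_zero] at hcon
      linarith
    · intro t; rw [hrw]; exact h2 t
    · rwa [natDegree_neg]
    · rwa [natDegree_neg]
    · rw [hrw]; exact h5
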